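/- Every $n$-quasi-paving matroid of rank $n$ on a finite ground set can be obtained from a tame paving matroid of rank $n$ by a finite sequence of principal extensions along flats of rank $n-2$. -/

import Mathlib

/-- Type-(1) circuits: `(n-1)`-subsets contained in the intersection of two distinct
members of the hypergraph `H`. -/
def IsType1 {α : Type*} [DecidableEq α] {k : ℕ} (H : Fin k → Finset α) (n : ℕ)
    (C : Finset α) : Prop :=
  C.card = n - 1 ∧ ∃ i j : Fin k, i ≠ j ∧ C ⊆ H i ∩ H j

/-- Type-(2) circuits: `n`-subsets of some member of `H` containing no type-(1) set. -/
def IsType2 {α : Type*} [DecidableEq α] {k : ℕ} (H : Fin k → Finset α) (n : ℕ)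
    (C : Finset α) : Prop :=
  C.card = n ∧ (∃ i : Fin k, C ⊆ H i) ∧ ∀ D ⊆ C, ¬ IsType1 H n D

/-- Type-(3) circuits: `(n+1)`-subsets containing no type-(1) or type-(2) set. -/
def IsType3 {α : Type*} [DecidableEq α] {k : ℕ} (H : Fin k → Finset α) (n : ℕ)
    (C : Finset α) : Prop :=
  C.card = n + 1 ∧ (∀ D ⊆ C, ¬ IsType1 H n D) ∧ (∀ D ⊆ C, ¬ IsType2 H n D)

/-- The circuits of the quasi-paving matroid construction. -/
def QPCircuit {α : Type*} [DecidableEq α] {k : ℕ} (H : Fin k → Finset α) (n : ℕ)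
    (C : Finset α) : Prop :=
  IsType1 H n C ∨ IsType2 H n C ∨ IsType3 H n C

/-- Any three distinct members of the hypergraph have empty intersection. -/
def TripleFree {α : Type*} [DecidableEq α] {k : ℕ} (H : Fin k → Finset α) : Prop :=
  ∀ i j m : Fin k, i ≠ j → i ≠ m → j ≠ m → H i ∩ H j ∩ H m = ∅

/-- `X` has rank `r` in the matroid `M`: `r` is the size of a largest independent
subset of `X`. -/
def HasRank {α : Type*} (M : Matroid α) (X : Set α) (r : ℕ) : Prop :=
  (∃ I ⊆ X, M.Indep I ∧ I.ncard = r) ∧ ∀ I ⊆ X, M.Indep I → I.ncard ≤ r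

/-- The bases of the principal extension `M' +_F a` of `M'` by `a` into the flat `F`. -/
def PrincipalExtBase {α : Type*} (M' : Matroid α) (F : Set α) (a : α)
    (B : Set α) : Prop :=
  M'.IsBase B ∨ ∃ B₀ b, M'.IsBase B₀ ∧ b ∈ B₀ ∩ F ∧ B = insert a (B₀ \ {b})

/-- One step: `M₂` is a principal extension of `M₁` by a new element along a flat of
rank `n - 2`. -/
def PrincipalExtStep {α : Type*} (n : ℕ) (M₁ M₂ : Matroid α) : Prop :=
  ∃ (a : α) (F : Set α), a ∉ M₁.E ∧ M₁.IsFlat F ∧ HasRank M₁ F (n - 2) ∧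
    M₂.E = insert a M₁.E ∧ ∀ B : Set α, M₂.IsBase B ↔ PrincipalExtBase M₁ F a B

/-! ### Auxiliary lemmas -/

open Set
open scoped Matroid

lemma flat_closure' {α : Type*} (M : Matroid α) (X : Set α) : M.IsFlat (M.closure X) := by
  rw [Matroid.closure_def, Set.sInter_eq_iInter]
  have hne : Nonempty {F : Set α // F ∈ {F | M.IsFlat F ∧ X ∩ M.E ⊆ F}} :=
    ⟨⟨M.E, M.ground_isFlat, Set.inter_subset_right⟩⟩
  exact Matroid.IsFlat.iInter fun F => F.2.1

lemma restrict_closure_subset' {α : Type*} (M : Matroid α) {R X : Set α}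
    (hR : R ⊆ M.E) (hX : X ⊆ R) : (M ↾ R).closure X ⊆ M.closure X := by
  obtain ⟨J, hJ⟩ := (M ↾ R).exists_isBasis X (by rwa [Matroid.restrict_ground_eq])
  intro y hy
  rw [← hJ.closure_eq_closure] at hy
  have hJM : M.Indep J := hJ.indep.of_restrict
  rcases hJ.indep.mem_closure_iff.1 hy with hdep | hyJ
  · have hsub : insert y J ⊆ R := by
      have := hdep.subset_ground; rwa [Matroid.restrict_ground_eq] at this
    have hnind : ¬ M.Indep (insert y J) := fun h =>
      hdep.not_indep (Matroid.restrict_indep_iff.2 ⟨h, hsub⟩)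
    have hycl : y ∈ M.closure J := hJM.mem_closure_iff.2
      (Or.inl (Matroid.dep_iff.2 ⟨hnind, hsub.trans hR⟩))
    exact M.closure_subset_closure hJ.subset hycl
  · exact M.subset_closure X (hX.trans hR) (hJ.subset hyJ)

lemma base_of_indep_ncard {α : Type*} [Finite α] {M : Matroid α} {n : ℕ} {B I : Set α}
    (hB : M.IsBase B) (hBn : B.ncard = n) (hI : M.Indep I) (hIn : I.ncard = n) :
    M.IsBase I := by
  obtain ⟨B', hB', hIB'⟩ := hI.exists_isBase_superset
  have hB'n : B'.ncard = n := (hB'.ncard_eq_ncard_of_isBase hB).trans hBn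
  have : I = B' := Set.eq_of_subset_of_ncard_le hIB' (by rw [hB'n, hIn]) (Set.toFinite _)
  rwa [this]

lemma mem_pair_of_tripleFree {α : Type*} [DecidableEq α] {k : ℕ} {H : Fin k → Finset α}
    (hTF : TripleFree H) {i j a : Fin k} (hij : i ≠ j) {y : α}
    (hyi : y ∈ H i) (hyj : y ∈ H j) (hya : y ∈ H a) : a = i ∨ a = j := by
  by_contra h
  push_neg at h
  have hemp := hTF a i j h.1 h.2 hij
  have : y ∈ H a ∩ H i ∩ H j := by simp [Finset.mem_inter, hya, hyi, hyj]
  rw [hemp] at this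
  simp at this

lemma inter_eq_of_tripleFree {α : Type*} [DecidableEq α] {k : ℕ} {H : Fin k → Finset α}
    (hTF : TripleFree H) {i j a c : Fin k} (hij : i ≠ j) (hac : a ≠ c) {y : α}
    (hya : y ∈ H a) (hyc : y ∈ H c) (hyi : y ∈ H i) (hyj : y ∈ H j) :
    H a ∩ H c = H i ∩ H j := by
  rcases mem_pair_of_tripleFree hTF hij hyi hyj hya with rfl | rfl <;>
    rcases mem_pair_of_tripleFree hTF hij hyi hyj hyc with rfl | rfl
  · exact absurd rfl hac
  · rfl
  · exact Finset.inter_comm _ _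
  · exact absurd rfl hac

/-- The goal predicate of the main theorem. -/
def QPGoal {d : ℕ} (n : ℕ) (M : Matroid (Fin d)) : Prop :=
  ∃ M₀ : Matroid (Fin d),
    (∃ (k : ℕ) (H : Fin k → Finset (Fin d)),
      (∀ i : Fin k, ↑(H i) ⊆ M₀.E) ∧
      (∀ i j : Fin k, i ≠ j → (H i ∩ H j).card ≤ n - 2) ∧
      TripleFree H ∧
      (∀ S : Set (Fin d), M₀.Indep S ↔
        (S ⊆ M₀.E ∧ ∀ C : Finset (Fin d), ↑C ⊆ S → ¬ QPCircuit H n C))) ∧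
    (∃ B : Set (Fin d), M₀.IsBase B ∧ B.ncard = n) ∧
    Relation.ReflTransGen (PrincipalExtStep n) M₀ M

lemma step_lemma {d n k : ℕ} (hn : 0 < n) {H : Fin k → Finset (Fin d)}
    {M : Matroid (Fin d)} (hTF : TripleFree H)
    (hHE : ∀ i, ↑(H i) ⊆ M.E)
    (hqp : ∀ S : Set (Fin d), M.Indep S ↔
      (S ⊆ M.E ∧ ∀ C : Finset (Fin d), ↑C ⊆ S → ¬ QPCircuit H n C))
    (hrank : ∃ B, M.IsBase B ∧ B.ncard = n)
    {i0 j0 : Fin k} (hij : i0 ≠ j0) (hbig : n - 2 < (H i0 ∩ H j0).card) :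
    ∃ (M₁ : Matroid (Fin d)) (H' : Fin k → Finset (Fin d)),
      (∑ p : Fin k × Fin k, (H' p.1 ∩ H' p.2).card) <
        (∑ p : Fin k × Fin k, (H p.1 ∩ H p.2).card) ∧
      TripleFree H' ∧ (∀ i, ↑(H' i) ⊆ M₁.E) ∧
      (∀ S : Set (Fin d), M₁.Indep S ↔
        (S ⊆ M₁.E ∧ ∀ C : Finset (Fin d), ↑C ⊆ S → ¬ QPCircuit H' n C)) ∧
      (∃ B, M₁.IsBase B ∧ B.ncard = n) ∧
      PrincipalExtStep n M₁ M := by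
  classical
  -- `n ≥ 2`
  have hn2 : 2 ≤ n := by
    by_contra h
    have hn1 : n = 1 := by omega
    have h0 : QPCircuit H n (∅ : Finset (Fin d)) :=
      Or.inl ⟨by simp [hn1], i0, j0, hij, by simp⟩
    exact ((hqp ∅).1 M.empty_indep).2 ∅ (by simp) h0
  set P : Finset (Fin d) := H i0 ∩ H j0 with hPdef
  have hPcard : n - 1 ≤ P.card := by omega
  obtain ⟨x, hxP⟩ : ∃ x, x ∈ P := Finset.card_pos.1 (by omega)
  have hxi0 : x ∈ H i0 := (Finset.mem_inter.1 hxP).1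
  have hxj0 : x ∈ H j0 := (Finset.mem_inter.1 hxP).2
  have hxE : x ∈ M.E := hHE i0 hxi0
  have hPE : ∀ y ∈ P, y ∈ M.E := fun y hy => hHE i0 (Finset.mem_inter.1 hy).1
  -- small subsets of the ground set are independent
  have small_indep : ∀ S : Set (Fin d), S ⊆ M.E → S.ncard ≤ n - 2 → M.Indep S := by
    intro S hSE hScard
    refine (hqp S).2 ⟨hSE, fun C hC hQP => ?_⟩
    have hCcard : C.card ≤ n - 2 := by
      have := Set.ncard_le_ncard hC (Set.toFinite S)
      rw [Set.ncard_coe_finset] at this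
      omega
    rcases hQP with ⟨h1, _⟩ | ⟨h1, _⟩ | ⟨h1, _⟩ <;> omega
  -- `(n-1)`-subsets of `P` are dependent
  have t1dep : ∀ A : Finset (Fin d), A ⊆ P → A.card = n - 1 → ¬ M.Indep ↑A := by
    intro A hA hAcard hAi
    exact ((hqp ↑A).1 hAi).2 A (subset_refl _)
      (Or.inl ⟨hAcard, i0, j0, hij, fun y hy => hA hy⟩)
  have hx_cl : ∀ A : Finset (Fin d), A ⊆ P.erase x → A.card = n - 2 →
      x ∈ M.closure ↑A := by
    intro A hA hAcard
    have hAP : A ⊆ P := hA.trans (Finset.erase_subset _ _)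
    have hAE : ↑A ⊆ M.E := fun y hy => hPE y (hAP hy)
    have hAind : M.Indep ↑A := small_indep _ hAE (by rw [Set.ncard_coe_finset]; omega)
    have hxA : x ∉ (↑A : Set (Fin d)) := fun h => (Finset.mem_erase.1 (hA h)).1 rfl
    rw [hAind.mem_closure_iff_of_notMem hxA, Matroid.dep_iff]
    refine ⟨fun hind => ?_, Set.insert_subset hxE hAE⟩
    rw [← Finset.coe_insert] at hind
    refine t1dep (insert x A) (Finset.insert_subset hxP hAP) ?_ hind
    rw [Finset.card_insert_of_notMem (fun h => hxA h)]
    omega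
  obtain ⟨A₀, hA₀sub, hA₀card⟩ :=
    Finset.exists_subset_card_eq (s := P.erase x) (n := n - 2)
      (by rw [Finset.card_erase_of_mem hxP]; omega)
  -- the restriction `M₁`
  set R : Set (Fin d) := M.E \ {x} with hRdef
  have hRE : R ⊆ M.E := Set.diff_subset
  have hA₀R : ↑A₀ ⊆ R := by
    intro y hy
    have hy' : y ∈ A₀ := hy
    have hyPe := hA₀sub hy'
    exact ⟨hPE y (Finset.mem_of_mem_erase hyPe),
      fun h => (Finset.mem_erase.1 hyPe).1 h⟩
  have hspan : M.Spanning R := by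
    rw [Matroid.spanning_iff_closure_eq hRE]
    refine (M.closure_subset_ground R).antisymm fun y hyE => ?_
    by_cases hyx : y = x
    · subst hyx
      exact M.closure_subset_closure hA₀R (hx_cl A₀ hA₀sub hA₀card)
    · exact M.subset_closure R hRE ⟨hyE, hyx⟩
  obtain ⟨B₁, hB₁, hB₁R⟩ := (Matroid.spanning_iff_exists_isBase_subset hRE).1 hspan
  obtain ⟨Bex, hBex, hBexcard⟩ := hrank
  have hBn : ∀ B, M.IsBase B → B.ncard = n := fun B hB =>
    (hB.ncard_eq_ncard_of_isBase hBex).trans hBexcard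
  set M₁ : Matroid (Fin d) := M ↾ R with hM₁def
  have hM₁E : M₁.E = R := rfl
  have hbase₁ : ∀ B, M.IsBase B → B ⊆ R → M₁.IsBase B := fun B hB hBR =>
    (Matroid.isBase_restrict_iff hRE).2 (Matroid.IsBase.isBasis_of_subset hRE hB hBR)
  have hB₁base : M₁.IsBase B₁ := hbase₁ B₁ hB₁ hB₁R
  have hB₁card : B₁.ncard = n := hBn B₁ hB₁
  have hB₁n : ∀ B, M₁.IsBase B → B.ncard = n := fun B hB =>
    (hB.ncard_eq_ncard_of_isBase hB₁base).trans hB₁card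
  have hM₁M : ∀ B, M₁.IsBase B → M.IsBase B := fun B hB =>
    base_of_indep_ncard hBex hBexcard hB.indep.of_restrict (hB₁n B hB)
  -- the erased hypergraph
  set H' : Fin k → Finset (Fin d) := fun m => (H m).erase x with hH'def
  have t1iff : ∀ C : Finset (Fin d), x ∉ C → (IsType1 H n C ↔ IsType1 H' n C) := by
    intro C hxC
    constructor
    · rintro ⟨hc, i, j, hij', hsub⟩
      refine ⟨hc, i, j, hij', fun y hy => ?_⟩
      have := hsub hy
      rw [Finset.mem_inter] at this ⊢
      simp only [hH'def, Finset.mem_erase]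
      exact ⟨⟨fun h => hxC (h ▸ hy), this.1⟩, ⟨fun h => hxC (h ▸ hy), this.2⟩⟩
    · rintro ⟨hc, i, j, hij', hsub⟩
      refine ⟨hc, i, j, hij', fun y hy => ?_⟩
      have := hsub hy
      rw [Finset.mem_inter] at this ⊢
      simp only [hH'def, Finset.mem_erase] at this
      exact ⟨this.1.2, this.2.2⟩
  have t2iff : ∀ C : Finset (Fin d), x ∉ C → (IsType2 H n C ↔ IsType2 H' n C) := by
    intro C hxC
    constructor
    · rintro ⟨hc, ⟨i, hsub⟩, hno⟩
      refine ⟨hc, ⟨i, fun y hy => ?_⟩, fun D hD h1 => hno D hD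
        ((t1iff D fun h => hxC (hD h)).2 h1)⟩
      exact Finset.mem_erase.2 ⟨fun h => hxC (h ▸ hy), hsub hy⟩
    · rintro ⟨hc, ⟨i, hsub⟩, hno⟩
      exact ⟨hc, ⟨i, fun y hy => Finset.mem_of_mem_erase (hsub hy)⟩,
        fun D hD h1 => hno D hD ((t1iff D fun h => hxC (hD h)).1 h1)⟩
  have qpiff : ∀ C : Finset (Fin d), x ∉ C → (QPCircuit H n C ↔ QPCircuit H' n C) := by
    intro C hxC
    have t3 : IsType3 H n C ↔ IsType3 H' n C := by
      constructor
      · rintro ⟨hc, h1, h2⟩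
        exact ⟨hc, fun D hD h => h1 D hD ((t1iff D fun hh => hxC (hD hh)).2 h),
          fun D hD h => h2 D hD ((t2iff D fun hh => hxC (hD hh)).2 h)⟩
      · rintro ⟨hc, h1, h2⟩
        exact ⟨hc, fun D hD h => h1 D hD ((t1iff D fun hh => hxC (hD hh)).1 h),
          fun D hD h => h2 D hD ((t2iff D fun hh => hxC (hD hh)).1 h)⟩
    unfold QPCircuit
    rw [t1iff C hxC, t2iff C hxC, t3]
  have hTF' : TripleFree H' := by
    intro i j m hij' him hjm
    refine Finset.subset_empty.1 ?_
    rw [← hTF i j m hij' him hjm]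
    exact Finset.inter_subset_inter
      (Finset.inter_subset_inter (Finset.erase_subset _ _) (Finset.erase_subset _ _))
      (Finset.erase_subset _ _)
  have hHE' : ∀ m, ↑(H' m) ⊆ M₁.E := by
    intro m y hy
    have hy' : y ∈ (H m).erase x := hy
    exact ⟨hHE m (Finset.mem_of_mem_erase hy'), fun h => (Finset.mem_erase.1 hy').1 h⟩
  -- the measure decreases
  have hmeas : (∑ p : Fin k × Fin k, (H' p.1 ∩ H' p.2).card) <
      (∑ p : Fin k × Fin k, (H p.1 ∩ H p.2).card) := by
    have hinter : ∀ a b : Fin k, H' a ∩ H' b = (H a ∩ H b).erase x := by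
      intro a b
      ext y
      simp only [hH'def, Finset.mem_inter, Finset.mem_erase]
      tauto
    refine Finset.sum_lt_sum (fun p _ => ?_) ⟨(i0, j0), Finset.mem_univ _, ?_⟩
    · rw [hinter]
      exact Finset.card_le_card (Finset.erase_subset _ _)
    · rw [hinter]
      exact Finset.card_lt_card ⟨Finset.erase_subset _ _,
        fun h => (Finset.mem_erase.1 (h hxP)).1 rfl⟩
  -- independence in `M₁`
  have hqp₁ : ∀ S : Set (Fin d), M₁.Indep S ↔
      (S ⊆ M₁.E ∧ ∀ C : Finset (Fin d), ↑C ⊆ S → ¬ QPCircuit H' n C) := by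
    intro S
    rw [hM₁def, Matroid.restrict_indep_iff]
    constructor
    · rintro ⟨hSi, hSR⟩
      refine ⟨hSR, fun C hC hQP => ?_⟩
      have hxC : x ∉ C := fun h => (hSR (hC h)).2 rfl
      exact ((hqp S).1 hSi).2 C hC ((qpiff C hxC).2 hQP)
    · rintro ⟨hSR, hno⟩
      refine ⟨(hqp S).2 ⟨hSR.trans hRE, fun C hC hQP => ?_⟩, hSR⟩
      have hxC : x ∉ C := fun h => (hSR (hC h)).2 rfl
      exact hno C hC ((qpiff C hxC).1 hQP)
  -- the flat F
  set Pe : Finset (Fin d) := P.erase x with hPedef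
  have hPeR : ↑Pe ⊆ R := by
    intro y hy
    have hy' : y ∈ Pe := hy
    exact ⟨hPE y (Finset.mem_of_mem_erase hy'), fun h => (Finset.mem_erase.1 hy').1 h⟩
  set F : Set (Fin d) := M₁.closure ↑Pe with hFdef
  have hPeF : ↑Pe ⊆ F := M₁.subset_closure ↑Pe hPeR
  have hFR : F ⊆ R := M₁.closure_subset_ground ↑Pe
  have hFclM : F ⊆ M.closure ↑Pe := restrict_closure_subset' M hRE hPeR
  -- HasRank M₁ F (n-2)
  have hupper : ∀ I, I ⊆ F → M₁.Indep I → I.ncard ≤ n - 2 := by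
    intro I hIF hIind
    obtain ⟨J, hJ⟩ := M₁.exists_isBasis ↑Pe hPeR
    have hJcard : J.ncard ≤ n - 2 := by
      by_contra hc
      push_neg at hc
      have hJfin : J.Finite := Set.toFinite J
      obtain ⟨A, hAJ, hAcard⟩ := Finset.exists_subset_card_eq (s := hJfin.toFinset) (n := n - 1)
        (by rw [← Set.ncard_eq_toFinset_card J hJfin]; omega)
      have hAJ' : (↑A : Set (Fin d)) ⊆ J := by
        intro y hy
        have := hAJ hy
        rwa [Set.Finite.mem_toFinset] at this
      have hAP : A ⊆ P := by
        intro y hy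
        have hyJ : y ∈ J := hAJ' hy
        have : y ∈ Pe := hJ.subset hyJ
        exact Finset.mem_of_mem_erase this
      exact t1dep A hAP hAcard (hJ.indep.of_restrict.subset hAJ')
    have hJF : M₁.IsBasis J F := hJ.isBasis_closure_right
    obtain ⟨I', hI', hII'⟩ := hIind.subset_isBasis_of_subset hIF (hFR.trans_eq hM₁E.symm)
    have hencard : I'.encard = J.encard := hI'.encard_eq_encard hJF
    have h1 : I.ncard ≤ I'.ncard := Set.ncard_le_ncard hII' (Set.toFinite _)
    have h2 : I'.ncard = J.ncard := by
      rw [Set.ncard_def, hencard, ← Set.ncard_def]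
    omega
  have hA₀F : (↑A₀ : Set (Fin d)) ⊆ F := fun y hy => hPeF (hA₀sub hy)
  have hA₀ind : M₁.Indep ↑A₀ := by
    rw [hM₁def, Matroid.restrict_indep_iff]
    exact ⟨small_indep _ (hA₀R.trans hRE) (by rw [Set.ncard_coe_finset]; omega), hA₀R⟩
  have hRank : HasRank M₁ F (n - 2) :=
    ⟨⟨↑A₀, hA₀F, hA₀ind, by rw [Set.ncard_coe_finset, hA₀card]⟩,
      fun I hIF hI => hupper I hIF hI⟩
  -- the base characterization
  have hBiff : ∀ B : Set (Fin d), M.IsBase B ↔ PrincipalExtBase M₁ F x B := by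
    intro B
    constructor
    · intro hB
      by_cases hxB : x ∈ B
      · right
        have hBind := hB.indep
        have hI : M.Indep (B \ {x}) := hBind.subset Set.diff_subset
        have hxcl : x ∉ M.closure (B \ {x}) :=
          (Matroid.indep_iff_forall_notMem_closure_sdiff hBind.subset_ground).1 hBind hxB
        have hb : ∃ b ∈ F, b ∉ M.closure (B \ {x}) := by
          by_contra hcon
          push_neg at hcon
          have hA₀cl : (↑A₀ : Set (Fin d)) ⊆ M.closure (B \ {x}) :=
            fun y hy => hcon y (hA₀F hy)
          have hx1 : x ∈ M.closure ↑A₀ := hx_cl A₀ hA₀sub hA₀card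
          have hx2 : x ∈ M.closure (M.closure (B \ {x})) :=
            M.closure_subset_closure hA₀cl hx1
          rw [M.closure_closure] at hx2
          exact hxcl hx2
        obtain ⟨b, hbF, hbcl⟩ := hb
        have hbR : b ∈ R := hFR hbF
        have hbE : b ∈ M.E := hRE hbR
        have hbI : b ∉ B \ {x} := fun h => hbcl (M.subset_closure _ hI.subset_ground h)
        have hB₀ind : M.Indep (insert b (B \ {x})) :=
          (hI.insert_indep_iff_of_notMem hbI).2 ⟨hbE, hbcl⟩
        have hBcard := hBn B hB
        have hIcard : (B \ {x}).ncard = n - 1 := by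
          rw [Set.ncard_diff_singleton_of_mem hxB, hBcard]
        have hB₀card : (insert b (B \ {x})).ncard = n := by
          rw [Set.ncard_insert_of_notMem hbI, hIcard]; omega
        have hB₀base : M.IsBase (insert b (B \ {x})) :=
          base_of_indep_ncard hBex hBexcard hB₀ind hB₀card
        have hB₀R : insert b (B \ {x}) ⊆ R := by
          intro y hy
          rcases Set.mem_insert_iff.1 hy with rfl | hy'
          · exact hbR
          · exact ⟨hBind.subset_ground hy'.1, hy'.2⟩
        refine ⟨insert b (B \ {x}), b, hbase₁ _ hB₀base hB₀R,
          ⟨Set.mem_insert _ _, hbF⟩, ?_⟩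
        rw [Set.insert_diff_self_of_notMem hbI, Set.insert_sdiff_singleton,
          Set.insert_eq_self.2 hxB]
      · left
        refine hbase₁ B hB fun y hy => ⟨hB.subset_ground hy, fun h => ?_⟩
        rw [Set.mem_singleton_iff] at h
        exact hxB (h ▸ hy)
    · rintro (hB | ⟨B₀, b, hB₀, ⟨hbB₀, hbF⟩, rfl⟩)
      · exact hM₁M B hB
      · have hB₀M : M.IsBase B₀ := hM₁M B₀ hB₀
        have hB₀ind : M.Indep B₀ := hB₀M.indep
        have hB₀card : B₀.ncard = n := hBn B₀ hB₀M
        have hB₀R : B₀ ⊆ R := hB₀.subset_ground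
        have hxB₀ : x ∉ B₀ := fun h => (hB₀R h).2 rfl
        have hbR : b ∈ R := hFR hbF
        have hbx : b ≠ x := fun h => hbR.2 (by rw [h]; rfl)
        have hBsubE : insert x (B₀ \ {b}) ⊆ M.E :=
          Set.insert_subset hxE (Set.diff_subset.trans hB₀ind.subset_ground)
        have hBcard : (insert x (B₀ \ {b})).ncard = n := by
          have h1 : (B₀ \ {b}).ncard = n - 1 := by
            rw [Set.ncard_diff_singleton_of_mem hbB₀, hB₀card]
          have hxnot : x ∉ B₀ \ {b} := fun h => hxB₀ h.1
          rw [Set.ncard_insert_of_notMem hxnot, h1]; omega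
        have hBind : M.Indep (insert x (B₀ \ {b})) := by
          refine (hqp _).2 ⟨hBsubE, ?_⟩
          intro C hC hQP
          have hCeB : (↑(C.erase x) : Set (Fin d)) ⊆ B₀ \ {b} := by
            intro y hy
            rw [Finset.coe_erase, Set.mem_diff, Set.mem_singleton_iff] at hy
            rcases Set.mem_insert_iff.1 (hC hy.1) with h | h
            · exact absurd h hy.2
            · exact h
          by_cases hxC : x ∈ C
          · rcases hQP with ⟨hc1, a, c, hac, hsubac⟩ | ⟨hc2, ⟨a, hsubA⟩, hnoT1⟩ |
              ⟨hc3, _, _⟩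
            · -- type 1
              have hxa : x ∈ H a := (Finset.mem_inter.1 (hsubac hxC)).1
              have hxc : x ∈ H c := (Finset.mem_inter.1 (hsubac hxC)).2
              have hPac : H a ∩ H c = H i0 ∩ H j0 :=
                inter_eq_of_tripleFree hTF hij hac hxa hxc hxi0 hxj0
              have hCP : C ⊆ P := by rw [hPdef, ← hPac]; exact hsubac
              have hCe : C.erase x ⊆ Pe := Finset.erase_subset_erase x hCP
              have hbCe : b ∉ (↑(C.erase x) : Set (Fin d)) := fun h => (hCeB h).2 rfl
              have hIind : M₁.Indep (insert b ↑(C.erase x)) := by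
                refine hB₀.indep.subset ?_
                intro y hy
                rcases Set.mem_insert_iff.1 hy with rfl | h
                · exact hbB₀
                · exact (hCeB h).1
              have hIF : insert b (↑(C.erase x) : Set (Fin d)) ⊆ F :=
                Set.insert_subset hbF fun y hy => hPeF (hCe hy)
              have hle := hRank.2 _ hIF hIind
              have hIcard : (insert b (↑(C.erase x) : Set (Fin d))).ncard = n - 1 := by
                rw [Set.ncard_insert_of_notMem hbCe, Set.ncard_coe_finset,
                  Finset.card_erase_of_mem hxC, hc1]
                omega
              omega
            · -- type 2
              have hxa : x ∈ H a := hsubA hxC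
              have haij : a = i0 ∨ a = j0 :=
                mem_pair_of_tripleFree hTF hij hxi0 hxj0 hxa
              have hPa : ∀ y ∈ P, y ∈ H a := by
                rcases haij with rfl | rfl
                · exact fun y hy => (Finset.mem_inter.1 hy).1
                · exact fun y hy => (Finset.mem_inter.1 hy).2
              have hCeInd : M.Indep ↑(C.erase x) :=
                hB₀ind.subset (hCeB.trans Set.diff_subset)
              have hCecard : (C.erase x).card = n - 1 := by
                rw [Finset.card_erase_of_mem hxC, hc2]
              have hPecl : (↑Pe : Set (Fin d)) ⊆ M.closure ↑(C.erase x) := by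
                intro y hy
                have hyPe : y ∈ Pe := hy
                have hyP : y ∈ P := Finset.mem_of_mem_erase hyPe
                have hyx : y ≠ x := (Finset.mem_erase.1 hyPe).1
                by_cases hyC : y ∈ C.erase x
                · exact M.subset_closure _ hCeInd.subset_ground hyC
                · have hyC' : y ∉ C := fun h => hyC (Finset.mem_erase.2 ⟨hyx, h⟩)
                  have hyE : y ∈ M.E := hPE y hyP
                  have hyCe : y ∉ (↑(C.erase x) : Set (Fin d)) := hyC
                  rw [hCeInd.mem_closure_iff_of_notMem hyCe, Matroid.dep_iff]
                  refine ⟨fun hind => ?_, Set.insert_subset hyE hCeInd.subset_ground⟩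
                  rw [← Finset.coe_insert] at hind
                  have hQP2 : QPCircuit H n (insert y (C.erase x)) := by
                    refine Or.inr (Or.inl ⟨?_, ⟨a, ?_⟩, ?_⟩)
                    · rw [Finset.card_insert_of_notMem hyC, hCecard]; omega
                    · intro z hz
                      rcases Finset.mem_insert.1 hz with rfl | hz'
                      · exact hPa _ hyP
                      · exact hsubA (Finset.mem_of_mem_erase hz')
                    · intro D hD hD1
                      obtain ⟨hDcard, e, f, hef, hDef⟩ := hD1
                      by_cases hyD : y ∈ D
                      · have hye : y ∈ H e := (Finset.mem_inter.1 (hDef hyD)).1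
                        have hyf : y ∈ H f := (Finset.mem_inter.1 (hDef hyD)).2
                        have hPef : H e ∩ H f = H i0 ∩ H j0 :=
                          inter_eq_of_tripleFree hTF hij hef hye hyf
                            (Finset.mem_inter.1 hyP).1 (Finset.mem_inter.1 hyP).2
                        have hDP : D ⊆ P := by rw [hPdef, ← hPef]; exact hDef
                        have hxD : x ∉ D := by
                          intro h
                          rcases Finset.mem_insert.1 (hD h) with h' | h'
                          · exact hyx h'.symm
                          · exact (Finset.mem_erase.1 h').1 rfl
                        refine hnoT1 (insert x (D.erase y)) ?_ ⟨?_, i0, j0, hij, ?_⟩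
                        · intro z hz
                          rcases Finset.mem_insert.1 hz with rfl | hz'
                          · exact hxC
                          · have hz2 := hD (Finset.mem_of_mem_erase hz')
                            rcases Finset.mem_insert.1 hz2 with rfl | h2
                            · exact absurd rfl (Finset.mem_erase.1 hz').1
                            · exact Finset.mem_of_mem_erase h2
                        · rw [Finset.card_insert_of_notMem
                            (fun h => hxD (Finset.mem_of_mem_erase h)),
                            Finset.card_erase_of_mem hyD, hDcard]
                          omega
                        · intro z hz
                          rcases Finset.mem_insert.1 hz with rfl | hz'
                          · exact hxP
                          · exact hDP (Finset.mem_of_mem_erase hz')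
                      · refine hnoT1 D (fun z hz => ?_) ⟨hDcard, e, f, hef, hDef⟩
                        rcases Finset.mem_insert.1 (hD hz) with rfl | h2
                        · exact absurd hz hyD
                        · exact Finset.mem_of_mem_erase h2
                  exact ((hqp _).1 hind).2 _ (subset_refl _) hQP2
              have hbcl : b ∈ M.closure ↑(C.erase x) := by
                have h1 : b ∈ M.closure ↑Pe := hFclM hbF
                exact M.closure_subset_closure_of_subset_closure hPecl h1
              have hbB₀cl : b ∈ M.closure (B₀ \ {b}) :=
                M.closure_subset_closure hCeB hbcl
              exact (Matroid.indep_iff_forall_notMem_closure_sdiff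
                hB₀ind.subset_ground).1 hB₀ind hbB₀ hbB₀cl
            · -- type 3
              have hle : C.card ≤ (insert x (B₀ \ {b})).ncard := by
                have := Set.ncard_le_ncard hC (Set.toFinite _)
                rwa [Set.ncard_coe_finset] at this
              rw [hBcard] at hle
              omega
          · -- x ∉ C
            have hCB₀ : ↑C ⊆ B₀ \ {b} := by
              intro y hy
              rcases Set.mem_insert_iff.1 (hC hy) with h | h
              · exact absurd (h ▸ hy) hxC
              · exact h
            exact ((hqp B₀).1 hB₀ind).2 C (hCB₀.trans Set.diff_subset) hQP
        exact base_of_indep_ncard hBex hBexcard hBind hBcard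
  -- assemble
  refine ⟨M₁, H', hmeas, hTF', hHE', hqp₁, ⟨B₁, hB₁base, hB₁card⟩,
    x, F, fun h => h.2 rfl, flat_closure' M₁ _, hRank, ?_, hBiff⟩
  rw [hM₁E, hRdef, Set.insert_sdiff_singleton, Set.insert_eq_self.2 hxE]

lemma mainAux {d : ℕ} (n : ℕ) (hn : 0 < n) (N : ℕ) :
    ∀ (k : ℕ) (H : Fin k → Finset (Fin d)) (M : Matroid (Fin d)),
      (∑ p : Fin k × Fin k, (H p.1 ∩ H p.2).card) ≤ N →
      TripleFree H →
      (∀ i, ↑(H i) ⊆ M.E) →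
      (∀ S : Set (Fin d), M.Indep S ↔
        (S ⊆ M.E ∧ ∀ C : Finset (Fin d), ↑C ⊆ S → ¬ QPCircuit H n C)) →
      (∃ B, M.IsBase B ∧ B.ncard = n) →
      QPGoal n M := by
  induction N with
  | zero =>
    intro k H M hmeas hTF hHE hqp hrank
    by_cases htame : ∀ i j : Fin k, i ≠ j → (H i ∩ H j).card ≤ n - 2
    · exact ⟨M, ⟨k, H, hHE, htame, hTF, hqp⟩, hrank, Relation.ReflTransGen.refl⟩
    · push_neg at htame
      obtain ⟨i0, j0, hij, hbig⟩ := htame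
      obtain ⟨M₁, H', hlt, _⟩ := step_lemma hn hTF hHE hqp hrank hij hbig
      omega
  | succ N ih =>
    intro k H M hmeas hTF hHE hqp hrank
    by_cases htame : ∀ i j : Fin k, i ≠ j → (H i ∩ H j).card ≤ n - 2
    · exact ⟨M, ⟨k, H, hHE, htame, hTF, hqp⟩, hrank, Relation.ReflTransGen.refl⟩
    · push_neg at htame
      obtain ⟨i0, j0, hij, hbig⟩ := htame
      obtain ⟨M₁, H', hlt, hTF', hHE', hqp₁, hrank₁, hstep⟩ :=
        step_lemma hn hTF hHE hqp hrank hij hbig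
      obtain ⟨M₀, hM₀, hrank₀, hrtg⟩ :=
        ih k H' M₁ (by omega) hTF' hHE' hqp₁ hrank₁
      exact ⟨M₀, hM₀, hrank₀, hrtg.tail hstep⟩

/-- Every `n`-quasi-paving matroid of rank `n` (on a finite ground
set) is obtained from a tame paving matroid of rank `n` — i.e. the quasi-paving matroid
of a hypergraph whose pairwise intersections have size at most `n - 2` and any three of
whose members meet trivially — by a finite sequence of principal extensions along flats
of rank `n - 2`. -/
theorem statement16 {d n : ℕ} (hn : 0 < n) (hnd : n ≤ d) (M : Matroid (Fin d))
    (hE : M.E = Set.univ)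
    (hqp : ∃ (k : ℕ) (H : Fin k → Finset (Fin d)), TripleFree H ∧
      ∀ S : Set (Fin d), M.Indep S ↔
        ∀ C : Finset (Fin d), ↑C ⊆ S → ¬ QPCircuit H n C)
    (hrank : ∃ B : Set (Fin d), M.IsBase B ∧ B.ncard = n) :
    ∃ M₀ : Matroid (Fin d),
      (∃ (k : ℕ) (H : Fin k → Finset (Fin d)),
        (∀ i : Fin k, ↑(H i) ⊆ M₀.E) ∧
        (∀ i j : Fin k, i ≠ j → (H i ∩ H j).card ≤ n - 2) ∧
        TripleFree H ∧
        (∀ S : Set (Fin d), M₀.Indep S ↔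
          (S ⊆ M₀.E ∧ ∀ C : Finset (Fin d), ↑C ⊆ S → ¬ QPCircuit H n C))) ∧
      (∃ B : Set (Fin d), M₀.IsBase B ∧ B.ncard = n) ∧
      Relation.ReflTransGen (PrincipalExtStep n) M₀ M := by
  obtain ⟨k, H, hTF, hInd⟩ := hqp
  have hHE : ∀ i, ↑(H i) ⊆ M.E := fun i => by rw [hE]; exact Set.subset_univ _
  have hqp' : ∀ S : Set (Fin d), M.Indep S ↔
      (S ⊆ M.E ∧ ∀ C : Finset (Fin d), ↑C ⊆ S → ¬ QPCircuit H n C) := by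
    intro S
    constructor
    · exact fun h => ⟨h.subset_ground, (hInd S).1 h⟩
    · exact fun h => (hInd S).2 h.2
  exact mainAux n hn (∑ p : Fin k × Fin k, (H p.1 ∩ H p.2).card) k H M le_rfl
    hTF hHE hqp' hrank
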